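/- For every finite subset S of symmetric n×n matrices over a commutative unital ring R, there exists a finite subset S̃ of (M_S^n) ∩ (R·I_n) such that a prime quadratic module of M_n(R) contains S if and only if it contains S̃. -/

import Mathlib

open Matrix

/-- A quadratic module in `M_n(R)`. -/
def IsQM {n : ℕ} {R : Type*} [CommRing R] (M : Set (Matrix (Fin n) (Fin n) R)) : Prop :=
  (∀ A ∈ M, A.IsSymm) ∧ (1 : Matrix (Fin n) (Fin n) R) ∈ M ∧
  (∀ a ∈ M, ∀ b ∈ M, a + b ∈ M) ∧
  ∀ (A : Matrix (Fin n) (Fin n) R), ∀ m ∈ M, Aᵀ * m * A ∈ M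

/-- A prime quadratic module in `M_n(R)`. -/
def IsPrimeQM {n : ℕ} {R : Type*} [CommRing R] (M : Set (Matrix (Fin n) (Fin n) R)) : Prop :=
  IsQM M ∧ -(1 : Matrix (Fin n) (Fin n) R) ∉ M ∧
  ∀ (A : Matrix (Fin n) (Fin n) R) (r : R), A.IsSymm → r ^ 2 • A ∈ M →
    A ∈ M ∨ r • (1 : Matrix (Fin n) (Fin n) R) ∈ M ∩ (-M)

/-- The smallest quadratic module of `M_n(R)` containing `S`. -/
def QMgen {n : ℕ} {R : Type*} [CommRing R] (S : Set (Matrix (Fin n) (Fin n) R)) :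
    Set (Matrix (Fin n) (Fin n) R) :=
  ⋂₀ {M | IsQM M ∧ S ⊆ M}

namespace Stmt12Aux

variable {n : ℕ} {R : Type*} [CommRing R]

/-- The value of the quadratic form attached to `B` at the vector `u`. -/
def qv (B : Matrix (Fin n) (Fin n) R) (u : Fin n → R) : R := u ⬝ᵥ B.mulVec u

theorem qv_conj (A B : Matrix (Fin n) (Fin n) R) (u) : qv (Aᵀ * B * A) u = qv B (A.mulVec u) := by
  rw [qv, qv, Matrix.mul_assoc, ← Matrix.mulVec_mulVec, ← Matrix.mulVec_mulVec,
    Matrix.dotProduct_mulVec, Matrix.vecMul_transpose]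

theorem vecMulVec_transpose' (a b : Fin n → R) : (vecMulVec a b)ᵀ = vecMulVec b a := by
  ext x y; simp [vecMulVec_apply, mul_comm]

theorem vecMulVec_mul_vecMulVec (a b c d : Fin n → R) :
    vecMulVec a b * vecMulVec c d = (b ⬝ᵥ c) • vecMulVec a d := by
  ext x y
  simp only [vecMulVec_apply, mul_apply, dotProduct, Matrix.smul_apply, smul_eq_mul]
  rw [Finset.sum_mul]
  exact Finset.sum_congr rfl fun i _ => by ring

theorem vecMulVec_mul (a b : Fin n → R) (X : Matrix (Fin n) (Fin n) R) :
    vecMulVec a b * X = vecMulVec a (X.vecMul b) := by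
  ext x y
  simp only [vecMulVec_apply, mul_apply, vecMul, dotProduct, Finset.mul_sum]
  exact Finset.sum_congr rfl fun i _ => by ring

theorem sum_single_vecMulVec :
    ∑ k : Fin n, vecMulVec (Pi.single k (1:R)) (Pi.single k (1:R))
      = (1 : Matrix (Fin n) (Fin n) R) := by
  ext x y
  rw [Matrix.sum_apply]
  simp only [vecMulVec_apply]
  rcases eq_or_ne x y with h | h
  · subst h
    rw [Finset.sum_eq_single x (fun k _ hk => by simp [Pi.single_apply, Ne.symm hk])
      (fun h => absurd (Finset.mem_univ x) h)]
    simp [one_apply]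
  · rw [Finset.sum_eq_zero, one_apply_ne h]
    intro k _
    by_cases hx : x = k <;> by_cases hy : y = k <;> simp_all [Pi.single_apply]

theorem QM.zero_mem {M : Set (Matrix (Fin n) (Fin n) R)} (hM : IsQM M) :
    (0 : Matrix (Fin n) (Fin n) R) ∈ M := by
  have := hM.2.2.2 0 1 hM.2.1
  simpa using this

theorem QM.sum_mem {M : Set (Matrix (Fin n) (Fin n) R)} (hM : IsQM M) {ι : Type*} (t : Finset ι)
    (f : ι → Matrix (Fin n) (Fin n) R) (h : ∀ i ∈ t, f i ∈ M) : ∑ i ∈ t, f i ∈ M :=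
  Finset.sum_induction f (· ∈ M) (fun a b ha hb => hM.2.2.1 a ha b hb) (QM.zero_mem hM) h

theorem QM.sq_smul_mem {M : Set (Matrix (Fin n) (Fin n) R)} (hM : IsQM M) (c : R) {X}
    (hX : X ∈ M) : c ^ 2 • X ∈ M := by
  have := hM.2.2.2 (c • 1) X hX
  simpa [Matrix.transpose_smul, Matrix.smul_mul, Matrix.mul_smul, smul_smul, sq] using this

theorem QM.gram_smul {M : Set (Matrix (Fin n) (Fin n) R)} (hM : IsQM M) {c : R}
    (hc : c • (1 : Matrix (Fin n) (Fin n) R) ∈ M) (Q : Matrix (Fin n) (Fin n) R) :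
    c • (Qᵀ * Q) ∈ M := by
  have := hM.2.2.2 Q _ hc
  simpa [Matrix.mul_smul, Matrix.smul_mul, Matrix.mul_assoc] using this

theorem QM.value_mem {M : Set (Matrix (Fin n) (Fin n) R)} (hM : IsQM M) {B} (hB : B ∈ M)
    (u : Fin n → R) : qv B u • (1 : Matrix (Fin n) (Fin n) R) ∈ M := by
  have key : ∀ k : Fin n, (vecMulVec u (Pi.single k (1:R)))ᵀ * B * (vecMulVec u (Pi.single k 1))
      = qv B u • vecMulVec (Pi.single k (1:R)) (Pi.single k (1:R)) := by
    intro k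
    rw [vecMulVec_transpose', vecMulVec_mul, vecMulVec_mul_vecMulVec]
    congr 1
    rw [qv, dotProduct_mulVec]
  have : qv B u • (1 : Matrix (Fin n) (Fin n) R)
      = ∑ k : Fin n, (vecMulVec u (Pi.single k (1:R)))ᵀ * B * (vecMulVec u (Pi.single k 1)) := by
    rw [← sum_single_vecMulVec, Finset.smul_sum]
    exact Finset.sum_congr rfl fun k _ => (key k).symm
  rw [this]
  exact QM.sum_mem hM _ _ fun k _ => hM.2.2.2 _ _ hB

/-- Scalar support of a quadratic module. -/
def sSupp (M : Set (Matrix (Fin n) (Fin n) R)) (r : R) : Prop :=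
  r • (1 : Matrix (Fin n) (Fin n) R) ∈ M ∧ -(r • (1 : Matrix (Fin n) (Fin n) R)) ∈ M

theorem sSupp.add {M : Set (Matrix (Fin n) (Fin n) R)} (hM : IsQM M) {a b : R}
    (ha : sSupp M a) (hb : sSupp M b) : sSupp M (a + b) := by
  constructor
  · have := hM.2.2.1 _ ha.1 _ hb.1; rwa [← add_smul] at this
  · have := hM.2.2.1 _ ha.2 _ hb.2; rwa [← neg_add, ← add_smul] at this

theorem sSupp.neg {M : Set (Matrix (Fin n) (Fin n) R)} {a : R}
    (ha : sSupp M a) : sSupp M (-a) := by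
  refine ⟨?_, ?_⟩ <;> simp only [neg_smul, neg_neg] <;> [exact ha.2; exact ha.1]

theorem not_sSupp_two {M : Set (Matrix (Fin n) (Fin n) R)} (hM : IsPrimeQM M) :
    ¬ sSupp M 2 := by
  rintro ⟨-, h2⟩
  apply hM.2.1
  have := hM.1.2.2.1 _ h2 _ hM.1.2.1
  have e : -((2:R) • (1 : Matrix (Fin n) (Fin n) R)) + 1 = -1 := by
    rw [two_smul]; abel
  rwa [e] at this

theorem prime_cases {M : Set (Matrix (Fin n) (Fin n) R)} (hM : IsPrimeQM M)
    {B : Matrix (Fin n) (Fin n) R} (hB : B.IsSymm) {r : R} (h : r ^ 2 • B ∈ M) :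
    B ∈ M ∨ sSupp M r := by
  rcases hM.2.2 B r hB h with h1 | h2
  · exact Or.inl h1
  · exact Or.inr ⟨h2.1, Set.mem_neg.mp h2.2⟩

theorem sSupp.vmv [NeZero n] {M : Set (Matrix (Fin n) (Fin n) R)} (hM : IsQM M) {c : R}
    (hc : sSupp M c) (x : Fin n → R) : c • vecMulVec x x ∈ M ∧ -(c • vecMulVec x x) ∈ M := by
  have i0 : Fin n := ⟨0, Nat.pos_of_ne_zero (NeZero.ne n)⟩
  have hQ : (vecMulVec (Pi.single i0 (1:R)) x)ᵀ * (vecMulVec (Pi.single i0 (1:R)) x)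
      = vecMulVec x x := by
    rw [vecMulVec_transpose', vecMulVec_mul_vecMulVec]
    have : (Pi.single i0 (1:R)) ⬝ᵥ (Pi.single i0 (1:R)) = 1 := by
      simp [dotProduct, Pi.single_apply]
    rw [this, one_smul]
  constructor
  · have := QM.gram_smul hM hc.1 (vecMulVec (Pi.single i0 (1:R)) x)
    rwa [hQ] at this
  · have := QM.gram_smul hM (c := -c) (by rw [neg_smul]; exact hc.2)
      (vecMulVec (Pi.single i0 (1:R)) x)
    rwa [hQ, neg_smul] at this

theorem sSupp.pair [NeZero n] {M : Set (Matrix (Fin n) (Fin n) R)} (hM : IsQM M) {c : R}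
    (hc : sSupp M c) (v w : Fin n → R) : c • (vecMulVec v w + vecMulVec w v) ∈ M := by
  have hdec : vecMulVec v w + vecMulVec w v
      = vecMulVec (v + w) (v + w) - vecMulVec v v - vecMulVec w w := by
    rw [show vecMulVec (v + w) (v + w) = vecMulVec v v + vecMulVec w w
        + (vecMulVec v w + vecMulVec w v) by
      ext x y; simp [vecMulVec_apply]; ring]
    abel
  rw [hdec, smul_sub, smul_sub, sub_eq_add_neg, sub_eq_add_neg]
  exact hM.2.2.1 _ (hM.2.2.1 _ (sSupp.vmv hM hc (v+w)).1 _ (sSupp.vmv hM hc v).2) _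
    (sSupp.vmv hM hc w).2

def Pm (i j : Fin n) : Matrix (Fin n) (Fin n) R :=
  if i = j then 1 else 1 + Matrix.single j i 1

def Pminv (i j : Fin n) : Matrix (Fin n) (Fin n) R :=
  if i = j then 1 else 1 - Matrix.single j i 1

def pvec (i j : Fin n) : Fin n → R := (Pm i j).mulVec (Pi.single i 1)

def Cm (B : Matrix (Fin n) (Fin n) R) (i j : Fin n) : Matrix (Fin n) (Fin n) R :=
  (Pm i j)ᵀ * B * Pm i j

def wcol (B : Matrix (Fin n) (Fin n) R) (i j : Fin n) : Fin n → R := fun l => Cm B i j l i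

def amv (B : Matrix (Fin n) (Fin n) R) (i j : Fin n) : R := Cm B i j i i

def Dm (B : Matrix (Fin n) (Fin n) R) (i j : Fin n) : Matrix (Fin n) (Fin n) R :=
  (amv B i j) ^ 3 • ((amv B i j) • Cm B i j - vecMulVec (wcol B i j) (wcol B i j))

def utv (B : Matrix (Fin n) (Fin n) R) (i j : Fin n) (u : Fin n → R) : Fin n → R :=
  amv B i j • u - (wcol B i j ⬝ᵥ u) • (Pi.single i 1 : Fin n → R)

theorem Pm_mul_Pminv (i j : Fin n) : (Pm i j : Matrix (Fin n) (Fin n) R) * Pminv i j = 1 := by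
  unfold Pm Pminv
  split
  · rw [one_mul]
  · next h =>
    rw [mul_sub, mul_one, add_mul, one_mul,
      Matrix.single_mul_single_of_ne (h := h), add_zero]
    abel

theorem Cm_isSymm {B : Matrix (Fin n) (Fin n) R} (hB : B.IsSymm) (i j : Fin n) :
    (Cm B i j).IsSymm := by
  unfold Cm Matrix.IsSymm
  rw [transpose_mul, transpose_mul, transpose_transpose, Matrix.mul_assoc, hB.eq]

theorem Pm_apply_of_ne (i j : Fin n) {m x : Fin n} (hx : x ≠ i) :
    (Pm i j : Matrix (Fin n) (Fin n) R) m x = if m = x then 1 else 0 := by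
  unfold Pm
  split
  · rw [one_apply]
  · rw [Matrix.add_apply, one_apply, Matrix.single_apply_of_ne _ _ _ _ _
      (by rintro ⟨-, rfl⟩; exact hx rfl), add_zero]

theorem Cm_row_eq_zero {B : Matrix (Fin n) (Fin n) R} {i j x : Fin n} (hx : x ≠ i)
    (hrow : ∀ y, B x y = 0) (y : Fin n) : Cm B i j x y = 0 := by
  rw [Cm, Matrix.mul_assoc, Matrix.mul_apply]
  have : ∀ m, (Pm i j : Matrix (Fin n) (Fin n) R)ᵀ x m * (B * Pm i j : Matrix (Fin n) (Fin n) R) m y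
      = if x = m then (B * Pm i j : Matrix (Fin n) (Fin n) R) m y else 0 := by
    intro m
    rw [Matrix.transpose_apply, Pm_apply_of_ne i j hx]
    by_cases h : m = x
    · subst h; simp
    · rw [if_neg h, zero_mul, if_neg (fun hh : x = m => h hh.symm)]
  rw [Finset.sum_congr rfl fun m _ => this m, Finset.sum_ite_eq]
  simp [Matrix.mul_apply, hrow]

theorem Bprime_row_i {B : Matrix (Fin n) (Fin n) R} (hB : B.IsSymm) (i j : Fin n) (y : Fin n) :
    ((amv B i j) • Cm B i j - vecMulVec (wcol B i j) (wcol B i j)) i y = 0 := by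
  have hC : (Cm B i j).IsSymm := Cm_isSymm hB i j
  simp only [Matrix.sub_apply, Matrix.smul_apply, vecMulVec_apply, smul_eq_mul]
  show Cm B i j i i * Cm B i j i y - Cm B i j i i * Cm B i j y i = 0
  rw [hC.apply i y, sub_self]

theorem qv_single (B : Matrix (Fin n) (Fin n) R) (i : Fin n) :
    qv B (Pi.single i 1) = B i i := by
  simp [qv, mulVec, dotProduct, Pi.single_apply]

theorem qv_smul (B : Matrix (Fin n) (Fin n) R) (c : R) (u) : qv (c • B) u = c * qv B u := by
  simp [qv, Matrix.smul_mulVec, dotProduct_smul, smul_eq_mul]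

theorem qv_matsub (A B : Matrix (Fin n) (Fin n) R) (u) : qv (A - B) u = qv A u - qv B u := by
  simp [qv, Matrix.sub_mulVec, dotProduct_sub]

theorem qv_vecMulVec (w u : Fin n → R) : qv (vecMulVec w w) u = (w ⬝ᵥ u)^2 := by
  have : (vecMulVec w w).mulVec u = (w ⬝ᵥ u) • w := by
    ext x
    simp only [vecMulVec_apply, mulVec, dotProduct, Pi.smul_apply, smul_eq_mul, Finset.sum_mul]
    exact Finset.sum_congr rfl fun i _ => by ring
  rw [qv, this, dotProduct_smul, smul_eq_mul, dotProduct_comm, sq]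

theorem qv_vec_expand (C : Matrix (Fin n) (Fin n) R) (a c : R) (u v : Fin n → R) :
    qv C (a • u - c • v) =
      a^2 * qv C u - a*c*(u ⬝ᵥ C.mulVec v) - a*c*(v ⬝ᵥ C.mulVec u) + c^2 * qv C v := by
  simp only [qv, Matrix.mulVec_sub, Matrix.mulVec_smul, dotProduct_sub, sub_dotProduct,
    dotProduct_smul, smul_dotProduct, smul_eq_mul]
  ring

theorem mulVec_single_eq_col (C : Matrix (Fin n) (Fin n) R) (i : Fin n) :
    C.mulVec (Pi.single i 1) = fun l => C l i := by
  ext l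
  simp [mulVec, dotProduct, Pi.single_apply]

theorem single_dotProduct_vec (v : Fin n → R) (i : Fin n) :
    (Pi.single i 1 : Fin n → R) ⬝ᵥ v = v i := by
  simp [dotProduct, Pi.single_apply]

theorem qv_Dm {B : Matrix (Fin n) (Fin n) R} (hB : B.IsSymm) (i j : Fin n) (u : Fin n → R) :
    qv (Dm B i j) u = (amv B i j)^2 * qv B ((Pm i j).mulVec (utv B i j u)) := by
  have hC : (Cm B i j).IsSymm := Cm_isSymm hB i j
  set a := amv B i j with ha
  set w := wcol B i j with hw
  set c := w ⬝ᵥ u with hc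
  have hcol : (Cm B i j).mulVec (Pi.single i 1) = w := mulVec_single_eq_col _ i
  have h2 : u ⬝ᵥ (Cm B i j).mulVec (Pi.single i 1) = c := by
    rw [hcol, hc, dotProduct_comm]
  have h3 : (Pi.single i 1 : Fin n → R) ⬝ᵥ (Cm B i j).mulVec u = c := by
    rw [single_dotProduct_vec]
    rw [hc, hw]
    simp only [mulVec, wcol, dotProduct]
    exact Finset.sum_congr rfl fun y _ => by rw [hC.apply i y]
  have h4 : qv (Cm B i j) (Pi.single i 1) = a := (qv_single _ i).trans rfl
  have key : qv B ((Pm i j).mulVec (utv B i j u)) = a^2 * qv (Cm B i j) u - a * c^2 := by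
    rw [← qv_conj, ← Cm]
    rw [utv, qv_vec_expand, h2, h3, h4]
    ring
  rw [key, Dm, qv_smul, qv_matsub, qv_smul, qv_vecMulVec, ← hc]
  ring

theorem amv_eq_qv_pvec (B : Matrix (Fin n) (Fin n) R) (i j : Fin n) :
    amv B i j = qv B (pvec i j) := by
  rw [pvec, ← qv_conj, ← Cm, qv_single]
  rfl

theorem pvec_eq (i j : Fin n) (h : i ≠ j) :
    (pvec i j : Fin n → R) = Pi.single i 1 + Pi.single j 1 := by
  rw [pvec, Pm, if_neg h]
  ext x
  rw [Matrix.add_mulVec, Matrix.one_mulVec, Pi.add_apply, Pi.add_apply]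
  congr 1
  simp only [mulVec, dotProduct, Pi.single_apply, Matrix.single, Matrix.of_apply,
    mul_ite, mul_one, mul_zero, ite_and]
  rw [Finset.sum_eq_single i (fun b _ hb => if_neg hb) (fun hi => absurd (Finset.mem_univ i) hi)]
  simp [eq_comm]

theorem pvec_same (i : Fin n) : (pvec i i : Fin n → R) = Pi.single i 1 := by
  rw [pvec, Pm, if_pos rfl, Matrix.one_mulVec]

theorem qv_pvec_ne {B : Matrix (Fin n) (Fin n) R} (hB : B.IsSymm) {i j : Fin n} (h : i ≠ j) :
    qv B (pvec i j) = B i i + B j j + 2 * B i j := by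
  have hd : ∀ a b : Fin n, (Pi.single a 1 : Fin n → R) ⬝ᵥ B.mulVec (Pi.single b 1) = B a b := by
    intro a b
    simp [mulVec, dotProduct, Pi.single_apply]
  rw [pvec_eq i j h]
  simp only [qv, Matrix.mulVec_add, dotProduct_add, add_dotProduct, hd]
  rw [hB.apply i j]
  ring

theorem four_smul_eq_sum_univ {B : Matrix (Fin n) (Fin n) R} (hB : B.IsSymm) :
    (4:R) • B = ∑ i : Fin n, ∑ j : Fin n, (2 * B i j) •
      (vecMulVec (Pi.single i 1) (Pi.single j 1) + vecMulVec (Pi.single j 1) (Pi.single i 1)) := by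
  ext x y
  have hterm : ∀ i j : Fin n, (((2 * B i j) •
      (vecMulVec (Pi.single i (1:R)) (Pi.single j 1) + vecMulVec (Pi.single j 1) (Pi.single i 1)))
        : Matrix (Fin n) (Fin n) R) x y
      = (if y = j then (if x = i then 2 * B i j else 0) else 0)
        + (if y = i then (if x = j then 2 * B i j else 0) else 0) := by
    intro i j
    simp only [Matrix.smul_apply, Matrix.add_apply, vecMulVec_apply, Pi.single_apply,
      smul_eq_mul, boole_mul, mul_add, mul_ite, mul_zero, mul_boole, mul_one]
  simp only [Matrix.sum_apply]
  rw [Finset.sum_congr rfl (fun i (_ : i ∈ Finset.univ) =>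
    Finset.sum_congr rfl fun j _ => hterm i j)]
  rw [Finset.sum_congr rfl (fun i (_ : i ∈ Finset.univ) => Finset.sum_add_distrib),
    Finset.sum_add_distrib]
  have hsnd : ∀ i : Fin n, (∑ j : Fin n, if y = i then (if x = j then 2 * B i j else 0) else 0)
      = (if y = i then 2 * B i x else 0) := by
    intro i
    by_cases hyi : y = i
    · simp only [hyi, if_true, Finset.sum_ite_eq Finset.univ x (fun j => 2 * B i j),
        Finset.mem_univ, if_pos]
    · simp [hyi]
  rw [Finset.sum_congr rfl (fun i (_ : i ∈ Finset.univ) =>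
    Finset.sum_ite_eq Finset.univ y (fun j => if x = i then 2 * B i j else 0))]
  rw [Finset.sum_congr rfl (fun i (_ : i ∈ Finset.univ) => hsnd i)]
  rw [Finset.sum_ite_eq Finset.univ y (fun i => 2 * B i x)]
  simp only [Finset.mem_univ, if_pos]
  rw [Finset.sum_ite_eq Finset.univ x (fun i => 2 * B i y)]
  simp only [Finset.mem_univ, if_pos, Matrix.smul_apply, smul_eq_mul]
  rw [hB.apply x y]
  ring

theorem Dm_isSymm {B : Matrix (Fin n) (Fin n) R} (hB : B.IsSymm) (i j : Fin n) :
    (Dm B i j).IsSymm := by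
  have hC := Cm_isSymm hB i j
  show (Dm B i j)ᵀ = Dm B i j
  rw [Dm, transpose_smul, transpose_sub, transpose_smul, hC.eq, vecMulVec_transpose']

theorem Dm_row_i {B : Matrix (Fin n) (Fin n) R} (hB : B.IsSymm) (i j y : Fin n) :
    Dm B i j i y = 0 := by
  have h := Bprime_row_i hB i j y
  rw [Dm, Matrix.smul_apply, h, smul_zero]

theorem Dm_row_out {B : Matrix (Fin n) (Fin n) R} {x i : Fin n} (hxi : x ≠ i)
    (hrow : ∀ y, B x y = 0) (j y : Fin n) : Dm B i j x y = 0 := by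
  have hC0 : ∀ z, Cm B i j x z = 0 := Cm_row_eq_zero hxi hrow
  rw [Dm, Matrix.smul_apply, Matrix.sub_apply, Matrix.smul_apply, vecMulVec_apply]
  rw [show wcol B i j x = 0 from hC0 i, hC0 y]
  simp

theorem main [NeZero n] (s : Finset (Fin n)) :
    ∀ B : Matrix (Fin n) (Fin n) R, B.IsSymm → (∀ x ∉ s, ∀ y, B x y = 0) →
    ∃ V : Set (Fin n → R), V.Finite ∧
      ∀ M : Set (Matrix (Fin n) (Fin n) R), IsPrimeQM M →
        (∀ u ∈ V, qv B u • (1 : Matrix (Fin n) (Fin n) R) ∈ M) → B ∈ M := by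
  induction s using Finset.strongInduction with
  | _ s IH =>
  intro B hB hsupp
  have hchild : ∀ i, i ∈ s → ∀ j : Fin n, ∃ V : Set (Fin n → R), V.Finite ∧
      ∀ M : Set (Matrix (Fin n) (Fin n) R), IsPrimeQM M →
        (∀ u ∈ V, qv (Dm B i j) u • (1 : Matrix (Fin n) (Fin n) R) ∈ M) → Dm B i j ∈ M := by
    intro i hi j
    refine IH (s.erase i) (Finset.erase_ssubset hi) (Dm B i j) (Dm_isSymm hB i j) ?_
    intro x hx y
    rcases eq_or_ne x i with rfl | hxi
    · exact Dm_row_i hB x j y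
    · exact Dm_row_out hxi (hsupp x (fun hxs => hx (Finset.mem_erase.mpr ⟨hxi, hxs⟩))) j y
  choose! Vf hVfin hVspec using hchild
  refine ⟨(⋃ i ∈ s, ⋃ j ∈ s, ({pvec i j} ∪
      ((fun u => (Pm i j).mulVec (utv B i j u)) '' Vf i j))), ?_, ?_⟩
  · exact Set.Finite.biUnion s.finite_toSet fun i hi => Set.Finite.biUnion s.finite_toSet
      fun j hj => (Set.finite_singleton _).union ((hVfin i hi j).image _)
  · intro M hM hvals
    have hpv : ∀ i ∈ s, ∀ j ∈ s, qv B (pvec i j) • (1 : Matrix (Fin n) (Fin n) R) ∈ M := by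
      intro i hi j hj
      exact hvals _ (Set.mem_biUnion hi (Set.mem_biUnion hj
        (Set.mem_union_left _ (Set.mem_singleton _))))
    by_cases hcase : ∃ i, i ∈ s ∧ ∃ j, j ∈ s ∧ ¬ sSupp M (qv B (pvec i j))
    · obtain ⟨i, hi, j, hj, hnd⟩ := hcase
      have hnd' : ¬ sSupp M (amv B i j) := by rw [amv_eq_qv_pvec]; exact hnd
      have ha1 : amv B i j • (1 : Matrix (Fin n) (Fin n) R) ∈ M := by
        rw [amv_eq_qv_pvec]; exact hpv i hi j hj
      have hDm : Dm B i j ∈ M := by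
        apply hVspec i hi j M hM
        intro u hu
        have hvec : qv B ((Pm i j).mulVec (utv B i j u)) • (1 : Matrix (Fin n) (Fin n) R) ∈ M :=
          hvals _ (Set.mem_biUnion hi (Set.mem_biUnion hj
            (Set.mem_union_right _ ⟨u, hu, rfl⟩)))
        rw [qv_Dm hB i j u, mul_smul]
        exact QM.sq_smul_mem hM.1 (amv B i j) hvec
      have hXX : (vecMulVec (Pi.single i (1:R)) (wcol B i j))ᵀ
          * (vecMulVec (Pi.single i (1:R)) (wcol B i j))
          = vecMulVec (wcol B i j) (wcol B i j) := by
        rw [vecMulVec_transpose', vecMulVec_mul_vecMulVec]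
        rw [show (Pi.single i (1:R)) ⬝ᵥ (Pi.single i (1:R)) = 1 by
          simp [dotProduct, Pi.single_apply]]
        rw [one_smul]
      have hww : (amv B i j)^3 • vecMulVec (wcol B i j) (wcol B i j) ∈ M := by
        have hconj := hM.1.2.2.2 (amv B i j • vecMulVec (Pi.single i 1) (wcol B i j)) _ ha1
        have heq : (amv B i j • vecMulVec (Pi.single i (1:R)) (wcol B i j))ᵀ *
            (amv B i j • (1 : Matrix (Fin n) (Fin n) R)) *
            (amv B i j • vecMulVec (Pi.single i (1:R)) (wcol B i j))
            = (amv B i j)^3 • vecMulVec (wcol B i j) (wcol B i j) := by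
          simp only [transpose_smul, Matrix.smul_mul, Matrix.mul_smul, Matrix.mul_one,
            smul_smul]
          rw [hXX]
          congr 1
          ring
        rwa [heq] at hconj
      have h4C : (amv B i j)^4 • Cm B i j ∈ M := by
        have hsplit : (amv B i j)^4 • Cm B i j
            = (amv B i j)^3 • vecMulVec (wcol B i j) (wcol B i j) + Dm B i j := by
          rw [Dm, smul_sub, smul_smul, ← pow_succ]
          abel
        rw [hsplit]
        exact hM.1.2.2.1 _ hww _ hDm
      have hsm2 : ((amv B i j)^2 • Cm B i j).IsSymm := by
        show _ᵀ = _
        rw [transpose_smul, (Cm_isSymm hB i j).eq]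
      have hC2 : (amv B i j)^2 • Cm B i j ∈ M := by
        rcases prime_cases hM hsm2 (r := amv B i j)
          (by rw [smul_smul, ← pow_add]; exact h4C) with h | h
        · exact h
        · exact absurd h hnd'
      have hCm : Cm B i j ∈ M := by
        rcases prime_cases hM (Cm_isSymm hB i j) (r := amv B i j) hC2 with h | h
        · exact h
        · exact absurd h hnd'
      have hback := hM.1.2.2.2 (Pminv i j) _ hCm
      have hPB : (Pminv i j)ᵀ * Cm B i j * Pminv i j = B := by
        have hPP := Pm_mul_Pminv (R := R) i j
        calc (Pminv i j)ᵀ * Cm B i j * Pminv i j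
            = ((Pm i j) * Pminv i j)ᵀ * B * ((Pm i j) * Pminv i j) := by
              rw [Cm, Matrix.transpose_mul]
              simp only [Matrix.mul_assoc]
          _ = B := by rw [hPP]; simp
      rwa [hPB] at hback
    · push_neg at hcase
      have hdiag : ∀ i ∈ s, sSupp M (B i i) := by
        intro i hi
        have h := hcase i hi i hi
        rwa [pvec_same, qv_single] at h
      have hco : ∀ i ∈ s, ∀ j ∈ s, sSupp M (2 * B i j) := by
        intro i hi j hj
        rcases eq_or_ne i j with rfl | hne
        · rw [two_mul]
          exact sSupp.add hM.1 (hdiag i hi) (hdiag i hi)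
        · have hq := hcase i hi j hj
          rw [qv_pvec_ne hB hne] at hq
          have hsum := sSupp.add hM.1 hq
            (sSupp.add hM.1 (hdiag i hi).neg (hdiag j hj).neg)
          rw [show B i i + B j j + 2 * B i j + (-(B i i) + -(B j j)) = 2 * B i j by ring] at hsum
          exact hsum
      have h4B : (2:R)^2 • B ∈ M := by
        rw [show ((2:R)^2) = (4:R) by norm_num, four_smul_eq_sum_univ hB]
        apply QM.sum_mem hM.1
        intro i _
        apply QM.sum_mem hM.1
        intro j _
        by_cases hi : i ∈ s
        · by_cases hj : j ∈ s
          · exact sSupp.pair hM.1 (hco i hi j hj) _ _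
          · have hz : B i j = 0 := by rw [← hB.apply i j]; exact hsupp j hj i
            rw [hz, mul_zero, zero_smul]
            exact QM.zero_mem hM.1
        · have hz : B i j = 0 := hsupp i hi j
          rw [hz, mul_zero, zero_smul]
          exact QM.zero_mem hM.1
      rcases prime_cases hM hB h4B with h | h
      · exact h
      · exact absurd h (not_sSupp_two hM)

end Stmt12Aux

open Stmt12Aux

theorem stmt12 {n : ℕ} [NeZero n] {R : Type*} [CommRing R]
    (S : Set (Matrix (Fin n) (Fin n) R)) (hfin : S.Finite) (hsym : ∀ A ∈ S, A.IsSymm) :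
    ∃ Stilde : Set (Matrix (Fin n) (Fin n) R), Stilde.Finite ∧
      Stilde ⊆ QMgen S ∩ (Set.range fun r : R => r • (1 : Matrix (Fin n) (Fin n) R)) ∧
      ∀ M : Set (Matrix (Fin n) (Fin n) R), IsPrimeQM M → (S ⊆ M ↔ Stilde ⊆ M) := by
  have key : ∀ A ∈ S, ∃ V : Set (Fin n → R), V.Finite ∧
      ∀ M : Set (Matrix (Fin n) (Fin n) R), IsPrimeQM M →
        (∀ u ∈ V, qv A u • (1 : Matrix (Fin n) (Fin n) R) ∈ M) → A ∈ M := by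
    intro A hA
    exact main Finset.univ A (hsym A hA) (fun x hx => absurd (Finset.mem_univ x) hx)
  choose! V hVfin hVspec using key
  refine ⟨⋃ A ∈ S, (fun u => qv A u • (1 : Matrix (Fin n) (Fin n) R)) '' V A, ?_, ?_, ?_⟩
  · exact Set.Finite.biUnion hfin fun A hA => (hVfin A hA).image _
  · rintro x hx
    simp only [Set.mem_iUnion, Set.mem_image] at hx
    obtain ⟨A, hA, u, hu, rfl⟩ := hx
    exact ⟨Set.mem_sInter.mpr fun M0 hM0 => QM.value_mem hM0.1 (hM0.2 hA) u,
      ⟨qv A u, rfl⟩⟩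
  · intro M hM
    constructor
    · intro hSM x hx
      simp only [Set.mem_iUnion, Set.mem_image] at hx
      obtain ⟨A, hA, u, hu, rfl⟩ := hx
      exact QM.value_mem hM.1 (hSM hA) u
    · intro hSt A hA
      refine hVspec A hA M hM fun u hu => ?_
      exact hSt (Set.mem_biUnion hA ⟨u, hu, rfl⟩)
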